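/- Let G be an F_k-free graph with bipartition V(G) = X ∪ Y such that the number of non-edges between X and Y is r. If v ∈ X satisfies d_{G[X]}(v) ≥ 2k and d_{G[Y]}(v) ≥ d_{G[X]}(v), then r ≥ ⌊d_{G[X]}(v)/k⌋ · (d_{G[X]}(v) − k + 1); consequently d_{G[X]}(v) ≤ 2√(kr). -/
import Mathlib


open SimpleGraph

/-- The matching number of `G` restricted to a vertex subset `S`. -/
noncomputable def nuOn {V : Type*} (G : SimpleGraph V) (S : Set V) : ℕ :=
  sSup {n | ∃ M : G.Subgraph, M.IsMatching ∧ M.verts ⊆ S ∧ M.edgeSet.ncard = n}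

/-- The matching number `ν(G)`. -/
noncomputable def nu {V : Type*} (G : SimpleGraph V) : ℕ := nuOn G Set.univ

/-- The friendship graph `F_k`: `k` triangles sharing the common center `none`. -/
def friendshipGraph (k : ℕ) : SimpleGraph (Option (Fin k × Fin 2)) :=
  SimpleGraph.fromRel (fun a b => a = none ∨ b = none ∨ ∃ i, a = some (i, 0) ∧ b = some (i, 1))

/-- `G` contains no copy of the friendship graph `F_k`. -/
def FkFree (k : ℕ) {V : Type*} (G : SimpleGraph V) : Prop :=
  ∀ f : friendshipGraph k →g G, ¬ Function.Injective ⇑f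

/-- Missing-crossing-edge bound on internal degrees in an `F_k`-free graph:
if `d_{G[X]}(v) ≥ 2k` and `d_{G[Y]}(v) ≥ d_{G[X]}(v)`, then
`r ≥ ⌊d_{G[X]}(v)/k⌋·(d_{G[X]}(v) - k + 1)`, hence `d_{G[X]}(v) ≤ 2√(kr)`. -/
theorem internal_degree_bound {V : Type*} [Fintype V] (k : ℕ) (hk : 1 ≤ k)
    (G : SimpleGraph V) (X Y : Set V)
    (hpart : X ∪ Y = Set.univ) (hdisj : Disjoint X Y) (hfree : FkFree k G)
    (r : ℕ) (hr : r = Set.ncard {p : V × V | p.1 ∈ X ∧ p.2 ∈ Y ∧ ¬ G.Adj p.1 p.2})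
    (v : V) (hv : v ∈ X)
    (hdeg : 2 * k ≤ (G.neighborSet v ∩ X).ncard)
    (hXY : (G.neighborSet v ∩ X).ncard ≤ (G.neighborSet v ∩ Y).ncard) :
    (G.neighborSet v ∩ X).ncard / k * ((G.neighborSet v ∩ X).ncard - k + 1) ≤ r ∧
      ((G.neighborSet v ∩ X).ncard : ℝ) ≤ 2 * Real.sqrt (k * r) := by
  classical
  set d := (G.neighborSet v ∩ X).ncard with hd
  set A : Finset V := (G.neighborSet v ∩ X).toFinset with hA
  set B : Finset V := (G.neighborSet v ∩ Y).toFinset with hB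
  have hAcard : A.card = d := (Set.ncard_eq_toFinset_card' _).symm
  have hBcard : d ≤ B.card := by
    rw [hd, Set.ncard_eq_toFinset_card'] at hXY ⊢
    exact le_trans le_rfl (by rw [Set.ncard_eq_toFinset_card'] at hXY; exact hXY)
  have hmemA : ∀ x ∈ A, G.Adj v x ∧ x ∈ X := by
    intro x hx
    rw [hA, Set.mem_toFinset] at hx
    exact hx
  have hmemB : ∀ x ∈ B, G.Adj v x ∧ x ∈ Y := by
    intro x hx
    rw [hB, Set.mem_toFinset] at hx
    exact hx
  -- cross matchings
  set Pr : Finset (V × V) → Prop := fun M =>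
    (∀ p ∈ M, p.1 ∈ A ∧ p.2 ∈ B ∧ G.Adj p.1 p.2) ∧
    ∀ p ∈ M, ∀ q ∈ M, p ≠ q → p.1 ≠ q.1 ∧ p.2 ≠ q.2 with hPr
  -- F_k-freeness bounds the size of any cross matching
  have hsmall : ∀ M : Finset (V × V), Pr M → M.card < k := by
    intro M hM
    by_contra hge
    push_neg at hge
    obtain ⟨M', hM'sub, hM'card⟩ := Finset.exists_subset_card_eq hge
    have e : Fin k ≃ {x // x ∈ M'} := (Finset.equivFinOfCardEq hM'card).symm
    set x : Fin k → V := fun i => ((e i : V × V)).1 with hx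
    set y : Fin k → V := fun i => ((e i : V × V)).2 with hy
    have hmem : ∀ i : Fin k, (e i : V × V) ∈ M := fun i => hM'sub (e i).2
    have hxA : ∀ i, x i ∈ A := fun i => (hM.1 _ (hmem i)).1
    have hyB : ∀ i, y i ∈ B := fun i => (hM.1 _ (hmem i)).2.1
    have hadj : ∀ i, G.Adj (x i) (y i) := fun i => (hM.1 _ (hmem i)).2.2
    have hne : ∀ i j : Fin k, i ≠ j → x i ≠ x j ∧ y i ≠ y j := by
      intro i j hij
      have h1 : (e i : V × V) ≠ (e j : V × V) := by
        intro h
        exact hij (e.injective (Subtype.ext h))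
      exact hM.2 _ (hmem i) _ (hmem j) h1
    have hvx : ∀ i, v ≠ x i := fun i => (hmemA _ (hxA i)).1.ne
    have hvy : ∀ i, v ≠ y i := fun i => (hmemB _ (hyB i)).1.ne
    have hxy : ∀ i j, x i ≠ y j := by
      intro i j h
      exact (Set.disjoint_left.mp hdisj (hmemA _ (hxA i)).2) (h ▸ (hmemB _ (hyB j)).2)
    set g : Option (Fin k × Fin 2) → V :=
      fun o => o.elim v (fun p => if p.2 = 0 then x p.1 else y p.1) with hg
    have hg0 : ∀ i, g (some (i, 0)) = x i := fun i => by simp [hg]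
    have hg1 : ∀ i, g (some (i, 1)) = y i := fun i => by simp [hg]
    have hgnone : g none = v := rfl
    have hadjv : ∀ p : Fin k × Fin 2, G.Adj v (g (some p)) := by
      rintro ⟨i, j⟩
      fin_cases j
      · simpa [hg] using (hmemA _ (hxA i)).1
      · simpa [hg] using (hmemB _ (hyB i)).1
    have hmap : ∀ {a b}, (friendshipGraph k).Adj a b → G.Adj (g a) (g b) := by
      intro a b hab
      rw [friendshipGraph, SimpleGraph.fromRel_adj] at hab
      obtain ⟨hne', hrel⟩ := hab
      rcases hrel with (rfl | rfl | ⟨i, rfl, rfl⟩) | (rfl | rfl | ⟨i, rfl, rfl⟩)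
      · rcases b with _ | p
        · exact absurd rfl hne'
        · exact hadjv p
      · rcases a with _ | p
        · exact absurd rfl hne'
        · exact (hadjv p).symm
      · rw [hg0, hg1]; exact hadj i
      · rcases a with _ | p
        · exact absurd rfl hne'
        · exact (hadjv p).symm
      · rcases b with _ | p
        · exact absurd rfl hne'
        · exact hadjv p
      · rw [hg0, hg1]; exact (hadj i).symm
    have hinj : Function.Injective g := by
      rintro (_ | ⟨i, ji⟩) (_ | ⟨j, jj⟩) hab
      · rfl
      · exfalso
        fin_cases jj
        · simp only [hg, Option.elim] at hab
          simp at hab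
          exact hvx j hab
        · simp only [hg, Option.elim] at hab
          simp at hab
          exact hvy j hab
      · exfalso
        fin_cases ji
        · simp only [hg, Option.elim] at hab
          simp at hab
          exact hvx i hab.symm
        · simp only [hg, Option.elim] at hab
          simp at hab
          exact hvy i hab.symm
      · fin_cases ji <;> fin_cases jj <;>
          simp only [hg, Option.elim] at hab <;> simp at hab
        · by_cases h : i = j
          · subst h; rfl
          · exact absurd hab (hne i j h).1
        · exact absurd hab (hxy i j)
        · exact absurd hab.symm (hxy j i)
        · by_cases h : i = j
          · subst h; rfl
          · exact absurd hab (hne i j h).2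
    exact hfree ⟨g, hmap⟩ hinj
  -- take a maximum cross matching
  set S : Finset (Finset (V × V)) := Finset.univ.filter Pr with hS
  have hSne : S.Nonempty := ⟨∅, by simp [hS, hPr]⟩
  obtain ⟨M, hMS, hMmax⟩ := Finset.exists_max_image S Finset.card hSne
  have hMPr : Pr M := (Finset.mem_filter.mp hMS).2
  have hMk : M.card < k := hsmall M hMPr
  set A' : Finset V := A \ M.image Prod.fst with hA'
  set B' : Finset V := B \ M.image Prod.snd with hB'
  have hA'card : d - k + 1 ≤ A'.card := by
    have h1 : A.card ≤ A'.card + (M.image Prod.fst).card := Finset.card_le_card_sdiff_add_card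
    have h2 : (M.image Prod.fst).card ≤ M.card := Finset.card_image_le
    omega
  have hB'card : d - k + 1 ≤ B'.card := by
    have h1 : B.card ≤ B'.card + (M.image Prod.snd).card := Finset.card_le_card_sdiff_add_card
    have h2 : (M.image Prod.snd).card ≤ M.card := Finset.card_image_le
    omega
  -- maximality: no edges between A' and B'
  have hnoedge : ∀ a ∈ A', ∀ b ∈ B', ¬ G.Adj a b := by
    intro a ha b hb hadj
    obtain ⟨haA, haf⟩ := Finset.mem_sdiff.mp ha
    obtain ⟨hbB, hbf⟩ := Finset.mem_sdiff.mp hb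
    have hnotmem : (a, b) ∉ M := fun h =>
      haf (Finset.mem_image.mpr ⟨(a, b), h, rfl⟩)
    have hN : Pr (insert (a, b) M) := by
      constructor
      · intro p hp
        rcases Finset.mem_insert.mp hp with rfl | hp
        · exact ⟨haA, hbB, hadj⟩
        · exact hMPr.1 p hp
      · intro p hp q hq hpq
        rcases Finset.mem_insert.mp hp with rfl | hp <;>
          rcases Finset.mem_insert.mp hq with h | hq
        · exact absurd h.symm hpq
        · constructor
          · intro h; exact haf (Finset.mem_image.mpr ⟨q, hq, h.symm⟩)
          · intro h; exact hbf (Finset.mem_image.mpr ⟨q, hq, h.symm⟩)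
        · subst h
          constructor
          · intro h; exact haf (Finset.mem_image.mpr ⟨p, hp, h⟩)
          · intro h; exact hbf (Finset.mem_image.mpr ⟨p, hp, h⟩)
        · exact hMPr.2 p hp q hq hpq
    have hNS : insert (a, b) M ∈ S := Finset.mem_filter.mpr ⟨Finset.mem_univ _, hN⟩
    have := hMmax _ hNS
    rw [Finset.card_insert_of_notMem hnotmem] at this
    omega
  -- non-edges contain A' ×ˢ B'
  have hsub : ↑(A' ×ˢ B') ⊆ {p : V × V | p.1 ∈ X ∧ p.2 ∈ Y ∧ ¬ G.Adj p.1 p.2} := by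
    rintro ⟨a, b⟩ hab
    rw [Finset.coe_product] at hab
    obtain ⟨ha, hb⟩ := hab
    refine ⟨(hmemA a (Finset.mem_sdiff.mp ha).1).2, (hmemB b (Finset.mem_sdiff.mp hb).1).2, ?_⟩
    exact hnoedge a ha b hb
  have hprod : A'.card * B'.card ≤ r := by
    rw [hr]
    calc A'.card * B'.card = (A' ×ˢ B').card := (Finset.card_product _ _).symm
      _ = (↑(A' ×ˢ B') : Set (V × V)).ncard := (Set.ncard_coe_finset _).symm
      _ ≤ _ := Set.ncard_le_ncard hsub (Set.toFinite _)
  have hkey : (d - k + 1) * (d - k + 1) ≤ r :=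
    le_trans (Nat.mul_le_mul hA'card hB'card) hprod
  have hdk : d / k ≤ d - k + 1 := by
    have h1 : d ≤ k * (d - k + 1) := by
      obtain ⟨c, hc⟩ : ∃ c, d = k + c := ⟨d - k, by omega⟩
      have : c ≤ k * c := Nat.le_mul_of_pos_left c hk
      calc d = k + c := hc
        _ ≤ k * c + k := by omega
        _ = k * (c + 1) := by ring
        _ = k * (d - k + 1) := by rw [hc]; congr 1; omega
    calc d / k ≤ (k * (d - k + 1)) / k := Nat.div_le_div_right h1
      _ = d - k + 1 := Nat.mul_div_cancel_left _ hk
  constructor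
  · exact le_trans (Nat.mul_le_mul_right _ hdk) hkey
  · have hkd : k ≤ d := by omega
    have hcast : ((d - k + 1 : ℕ) : ℝ) = (d : ℝ) - k + 1 := by
      push_cast [Nat.cast_sub hkd]
      ring
    have h2k : (2 * k : ℝ) ≤ d := by exact_mod_cast hdeg
    have hk1 : (1 : ℝ) ≤ k := by exact_mod_cast hk
    have hhalf : (d : ℝ) / 2 ≤ ((d - k + 1 : ℕ) : ℝ) := by
      rw [hcast]; linarith
    have hsq : ((d : ℝ) / 2) ^ 2 ≤ (k * r : ℝ) := by
      have h1 : (((d - k + 1) * (d - k + 1) : ℕ) : ℝ) ≤ (r : ℝ) := by exact_mod_cast hkey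
      push_cast [Nat.cast_sub hkd] at h1
      nlinarith [Nat.cast_nonneg (α := ℝ) r, Nat.cast_nonneg (α := ℝ) d, hhalf, hk1, hcast]
    have hd2 : (0 : ℝ) ≤ (d : ℝ) / 2 := by positivity
    have hkr : (0 : ℝ) ≤ (k : ℝ) * r := by positivity
    have := (Real.le_sqrt hd2 hkr).mpr (by exact_mod_cast hsq)
    linarith
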